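/- For j₀, k₀ ∈ {0,1} define ϱ_{j₀,k₀} ∈ ℂ as the coordinate of U_Φ · E_{m,s,ε_{j₀}} at basis index k₀, where ε₀ = (1,0), ε₁ = (0,1) ∈ ℂ². Suppose α = (α₀, α₁) ∈ ℂ² with |α₀|² + |α₁|² = 1 and λ ∈ ℂ satisfy ϱ_{0,0}·α₀ + ϱ_{1,0}·α₁ = λ·2^{−n/2}·α₀ and ϱ_{0,1}·α₀ + ϱ_{1,1}·α₁ = λ·2^{−n/2}·α₁. Then U_Φ · E_{m,s,α} = λ · E_{m,s,α}, i.e. E_{m,s,α} is an eigenvector of U_Φ with eigenvalue λ, and moreover |λ| = 1. -/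

import Mathlib

open Complex Matrix

/-- The single-qubit gate `R_X(−π/2) = (1/√2)[[1, i],[i, 1]]`. -/
noncomputable def RXgate : Matrix (Fin 2) (Fin 2) ℂ :=
  (1 / Real.sqrt 2 : ℝ) • !![1, I; I, 1]

/-- The single-qubit phase gate `Φ = [[1,0],[0,e^{ix}]]`. -/
noncomputable def phaseGate (x : ℝ) : Matrix (Fin 2) (Fin 2) ℂ :=
  !![1, 0; 0, Complex.exp (I * x)]

/-- A single-qubit gate `A` applied to the photon qubit (bit `0`) of the
`(n+1)`-qubit space `ℂ^{2^{n+1}}`, whose computational basis vectors `|j⟩` are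
indexed by integers `j = Σ_l j_l 2^l`. -/
noncomputable def photonGate (n : ℕ) (A : Matrix (Fin 2) (Fin 2) ℂ) :
    Matrix (Fin (2 ^ (n + 1))) (Fin (2 ^ (n + 1))) ℂ :=
  fun k j => if (k : ℕ) / 2 = (j : ℕ) / 2
    then A ⟨(k : ℕ) % 2, by omega⟩ ⟨(j : ℕ) % 2, by omega⟩ else 0

/-- CNOT gate on `ℂ^{2^{n+1}}` with control the photon qubit (bit `0`) and target
bit `t`: it maps `|j⟩` to `|j XOR 2^t⟩` when bit `0` of `j` is `1`, else `|j⟩`. -/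
def cnotGate (n t : ℕ) : Matrix (Fin (2 ^ (n + 1))) (Fin (2 ^ (n + 1))) ℂ :=
  fun k j =>
    if (k : ℕ) = (if (j : ℕ) % 2 = 1 then (j : ℕ) ^^^ 2 ^ t else (j : ℕ)) then 1 else 0

/-- The `k`-th step `S_k` of the which-path-detector circuit: for `1 ≤ k ≤ n` it applies
`R_X(−π/2)` followed by `Φ_k` to the photon qubit and then a CNOT with control the photon
qubit and target the `k`-th detector qubit (bit `n+1−k`); `S_{n+1}` applies `R_X(−π/2)`
followed by `Φ_{n+1}` to the photon qubit (no CNOT). -/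
noncomputable def stepGate (n : ℕ) (φ : ℕ → ℝ) (k : ℕ) :
    Matrix (Fin (2 ^ (n + 1))) (Fin (2 ^ (n + 1))) ℂ :=
  (if k ≤ n then cnotGate n (n + 1 - k) else 1) * photonGate n (phaseGate (φ k) * RXgate)

/-- The ordered product `S_k ⋯ S_2 S_1`. -/
noncomputable def Sprod (n : ℕ) (φ : ℕ → ℝ) :
    ℕ → Matrix (Fin (2 ^ (n + 1))) (Fin (2 ^ (n + 1))) ℂ
  | 0 => 1
  | k + 1 => stepGate n φ (k + 1) * Sprod n φ k

/-- The unitary operator `U_Φ = S_{n+1} S_n ⋯ S_1` on the `(n+1)`-qubit space. -/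
noncomputable def Uphi (n : ℕ) (φ : ℕ → ℝ) :
    Matrix (Fin (2 ^ (n + 1))) (Fin (2 ^ (n + 1))) ℂ :=
  Sprod n φ (n + 1)

/-- The vector `E_{m,s,α} ∈ ℂ^{2^{n+1}}` whose coordinate at basis index
`j = Σ_{l=0}^{n} j_l 2^l` is `2^{−n/2} · (−1)^{Σ_{l=1}^{m−1} j_l s_l} · α_{j₀}`. -/
noncomputable def Evec (n m : ℕ) (s : ℕ → Bool) (α : Fin 2 → ℂ) :
    Fin (2 ^ (n + 1)) → ℂ :=
  fun j => ((1 / Real.sqrt 2 : ℝ) ^ n : ℂ) *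
    (∏ l ∈ Finset.Icc 1 (m - 1), if (j : ℕ).testBit l ∧ s l then (-1 : ℂ) else 1) *
    α ⟨(j : ℕ) % 2, by omega⟩

/-- `ϱ_{j₀,k₀}`: the coordinate of `U_Φ · E_{m,s,ε_{j₀}}` at basis index `k₀ ∈ {0,1}`,
where `ε₀ = (1,0)` and `ε₁ = (0,1)` in `ℂ²`. -/
noncomputable def rho (n m : ℕ) (φ : ℕ → ℝ) (s : ℕ → Bool) (j₀ k₀ : Fin 2) : ℂ :=
  (Uphi n φ *ᵥ Evec n m s (fun i => if i = j₀ then 1 else 0))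
    ⟨(k₀ : ℕ), lt_of_lt_of_le k₀.isLt
      (by calc (2 : ℕ) = 2 ^ 1 := (pow_one 2).symm
        _ ≤ 2 ^ (n + 1) := Nat.pow_le_pow_right (by norm_num) (by omega))⟩


noncomputable def chi (m : ℕ) (s : ℕ → Bool) (j : ℕ) : ℂ :=
  ∏ l ∈ Finset.Icc 1 (m - 1), if j.testBit l ∧ s l then (-1 : ℂ) else 1

noncomputable def Wvec (n m : ℕ) (s : ℕ → Bool) (β : Fin 2 → ℂ) :
    Fin (2 ^ (n + 1)) → ℂ :=
  fun j => ((1 / Real.sqrt 2 : ℝ) ^ n : ℂ) * chi m s (j : ℕ) * β ⟨(j : ℕ) % 2, by omega⟩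

noncomputable def eps (m : ℕ) (s : ℕ → Bool) (t : ℕ) : ℂ :=
  if 1 ≤ t ∧ t ≤ m - 1 ∧ s t then -1 else 1

open Fin.NatCast in
lemma finmk2 (x : ℕ) (pf : x % 2 < 2) : (⟨x % 2, pf⟩ : Fin 2) = (x : Fin 2) := by
  ext; simp [Fin.val_natCast, Nat.mod_mod_of_dvd]

lemma chi_of_div2_eq {m : ℕ} {s : ℕ → Bool} {a b : ℕ} (h : a / 2 = b / 2) :
    chi m s a = chi m s b := by
  unfold chi
  refine Finset.prod_congr rfl fun l hl => ?_
  obtain ⟨l', rfl⟩ : ∃ l', l = l' + 1 :=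
    ⟨l - 1, by have := (Finset.mem_Icc.mp hl).1; omega⟩
  rw [Nat.testBit_succ, Nat.testBit_succ, h]

lemma chi_xor (m : ℕ) (s : ℕ → Bool) (t : ℕ) (ht : 1 ≤ t) (k : ℕ) :
    chi m s (k ^^^ 2 ^ t) = eps m s t * chi m s k := by
  have key : ∀ l, l ≠ t → (k ^^^ 2 ^ t).testBit l = k.testBit l := by
    intro l hl
    rw [Nat.testBit_xor, Nat.testBit_two_pow_of_ne (fun h => hl h.symm), Bool.xor_false]
  have keyt : (k ^^^ 2 ^ t).testBit t = !(k.testBit t) := by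
    rw [Nat.testBit_xor, Nat.testBit_two_pow_self, Bool.xor_true]
  unfold chi eps
  by_cases hIn : t ∈ Finset.Icc 1 (m - 1)
  · rw [← Finset.mul_prod_erase _ _ hIn, ← Finset.mul_prod_erase _ _ hIn]
    have hrest : (∏ l ∈ (Finset.Icc 1 (m - 1)).erase t,
          (if (k ^^^ 2 ^ t).testBit l ∧ s l then (-1 : ℂ) else 1))
        = ∏ l ∈ (Finset.Icc 1 (m - 1)).erase t,
          (if k.testBit l ∧ s l then (-1 : ℂ) else 1) :=
      Finset.prod_congr rfl fun l hl => by rw [key l (Finset.ne_of_mem_erase hl)]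
    rw [hrest, keyt]
    have hmem := Finset.mem_Icc.mp hIn
    rcases hst : s t with _ | _ <;> rcases hkt : k.testBit t with _ | _ <;>
      simp [hst, hkt, hmem.1, hmem.2]
  · have hcond : ¬(1 ≤ t ∧ t ≤ m - 1 ∧ s t = true) := by
      simp only [Finset.mem_Icc, not_and] at hIn
      intro h; exact absurd (h.2.1) (hIn h.1)
    rw [if_neg (by simpa using hcond), one_mul]
    exact Finset.prod_congr rfl fun l hl => by
      rw [key l (by rintro rfl; exact hIn hl)]

lemma xor_mod_two (k t : ℕ) (ht : 1 ≤ t) : (k ^^^ 2 ^ t) % 2 = k % 2 := by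
  have h1 : (k ^^^ 2 ^ t).testBit 0 = k.testBit 0 := by
    rw [Nat.testBit_xor, Nat.testBit_two_pow_of_ne (by omega), Bool.xor_false]
  rw [Nat.testBit_zero, Nat.testBit_zero, decide_eq_decide] at h1
  omega

lemma photon_mulVec (n m : ℕ) (s : ℕ → Bool) (A : Matrix (Fin 2) (Fin 2) ℂ)
    (β : Fin 2 → ℂ) :
    photonGate n A *ᵥ Wvec n m s β = Wvec n m s (A *ᵥ β) := by
  funext k
  have hpow : 2 ^ (n + 1) = 2 * 2 ^ n := by ring
  have hk := k.isLt
  have h0 : 2 * ((k : ℕ) / 2) < 2 ^ (n + 1) := by omega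
  have h1 : 2 * ((k : ℕ) / 2) + 1 < 2 ^ (n + 1) := by omega
  set q : ℕ := (k : ℕ) / 2 with hq
  set j0 : Fin (2 ^ (n + 1)) := ⟨2 * q, h0⟩ with hj0
  set j1 : Fin (2 ^ (n + 1)) := ⟨2 * q + 1, h1⟩ with hj1
  have hne : j0 ≠ j1 := by simp [hj0, hj1, Fin.ext_iff]
  have hsum : (photonGate n A *ᵥ Wvec n m s β) k
      = ∑ j ∈ ({j0, j1} : Finset (Fin (2 ^ (n + 1)))),
          photonGate n A k j * Wvec n m s β j := by
    simp only [Matrix.mulVec, dotProduct]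
    refine (Finset.sum_subset (Finset.subset_univ _) ?_).symm
    intro x _ hx
    have hcond : ¬ ((k : ℕ) / 2 = (x : ℕ) / 2) := by
      intro h
      apply hx
      simp only [Finset.mem_insert, Finset.mem_singleton, Fin.ext_iff, hj0, hj1]
      omega
    simp [photonGate, hcond]
  rw [hsum, Finset.sum_pair hne]
  have e0 : photonGate n A k j0 = A ⟨(k : ℕ) % 2, by omega⟩ 0 := by
    simp [photonGate, hj0, Nat.mul_div_cancel_left, ← hq]
  have e1 : photonGate n A k j1 = A ⟨(k : ℕ) % 2, by omega⟩ 1 := by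
    have hd : (2 * q + 1) / 2 = q := by omega
    have hm : (2 * q + 1) % 2 = 1 := by omega
    simp [photonGate, hj1, hd, hm, ← hq]
  have w0 : Wvec n m s β j0
      = ((1 / Real.sqrt 2 : ℝ) ^ n : ℂ) * chi m s (k : ℕ) * β 0 := by
    have hm : (2 * q) % 2 = 0 := by omega
    simp only [Wvec, hj0]
    rw [chi_of_div2_eq (show (2 * q) / 2 = (k : ℕ) / 2 by omega)]
    simp [hm]
  have w1 : Wvec n m s β j1
      = ((1 / Real.sqrt 2 : ℝ) ^ n : ℂ) * chi m s (k : ℕ) * β 1 := by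
    have hm : (2 * q + 1) % 2 = 1 := by omega
    simp only [Wvec, hj1]
    rw [chi_of_div2_eq (show (2 * q + 1) / 2 = (k : ℕ) / 2 by omega)]
    simp [hm]
  rw [e0, e1, w0, w1]
  simp only [Wvec, Matrix.mulVec, dotProduct, Fin.sum_univ_two]
  ring

lemma cnot_mulVec (n m : ℕ) (s : ℕ → Bool) (t : ℕ) (ht1 : 1 ≤ t) (ht2 : t ≤ n)
    (β : Fin 2 → ℂ) :
    cnotGate n t *ᵥ Wvec n m s β
      = Wvec n m s (fun b => if b = 0 then β 0 else eps m s t * β 1) := by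
  funext k
  have hpt : (2 : ℕ) ^ t < 2 ^ (n + 1) := Nat.pow_lt_pow_right (by norm_num) (by omega)
  have hsum : ∀ (a : ℕ) (ha : a < 2 ^ (n + 1)),
      (∀ j : Fin (2 ^ (n + 1)),
        ((k : ℕ) = (if (j : ℕ) % 2 = 1 then (j : ℕ) ^^^ 2 ^ t else (j : ℕ))) ↔ j = ⟨a, ha⟩) →
      (cnotGate n t *ᵥ Wvec n m s β) k = Wvec n m s β ⟨a, ha⟩ := by
    intro a ha hiff
    simp only [Matrix.mulVec, dotProduct, cnotGate]
    have key : ∀ j : Fin (2 ^ (n + 1)),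
        (if ((k : ℕ) = (if (j : ℕ) % 2 = 1 then (j : ℕ) ^^^ 2 ^ t else (j : ℕ)))
            then (1 : ℂ) else 0) * Wvec n m s β j
          = if j = ⟨a, ha⟩ then Wvec n m s β j else 0 := by
      intro j
      by_cases hc : ((k : ℕ) = if (j : ℕ) % 2 = 1 then (j : ℕ) ^^^ 2 ^ t else (j : ℕ))
      · rw [if_pos hc, if_pos ((hiff j).mp hc), one_mul]
      · rw [if_neg hc, if_neg (fun hh => hc ((hiff j).mpr hh)), zero_mul]
    rw [Finset.sum_congr rfl fun j _ => key j, Finset.sum_ite_eq']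
    simp
  by_cases hk2 : (k : ℕ) % 2 = 1
  · have ha : (k : ℕ) ^^^ 2 ^ t < 2 ^ (n + 1) := Nat.xor_lt_two_pow k.isLt hpt
    have hiff : ∀ j : Fin (2 ^ (n + 1)),
        ((k : ℕ) = (if (j : ℕ) % 2 = 1 then (j : ℕ) ^^^ 2 ^ t else (j : ℕ)))
          ↔ j = ⟨(k : ℕ) ^^^ 2 ^ t, ha⟩ := by
      intro j
      rw [Fin.ext_iff]
      simp only [Fin.val_mk]
      constructor
      · intro h
        by_cases hj : (j : ℕ) % 2 = 1
        · rw [if_pos hj] at h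
          simp [h, Nat.xor_xor_cancel_right]
        · rw [if_neg hj] at h
          exact absurd (h ▸ hk2) hj
      · intro h
        have hj : (j : ℕ) % 2 = 1 := by
          have := xor_mod_two (k : ℕ) t ht1
          omega
        rw [if_pos hj]
        simp only [h]
        rw [Nat.xor_xor_cancel_right]
    rw [hsum _ ha hiff]
    have ham : ((k : ℕ) ^^^ 2 ^ t) % 2 = 1 := by rw [xor_mod_two _ _ ht1]; exact hk2
    simp only [Wvec]
    rw [chi_xor m s t ht1]
    simp only [ham, hk2]
    norm_num
    ring
  · have hiff : ∀ j : Fin (2 ^ (n + 1)),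
        ((k : ℕ) = (if (j : ℕ) % 2 = 1 then (j : ℕ) ^^^ 2 ^ t else (j : ℕ)))
          ↔ j = ⟨(k : ℕ), k.isLt⟩ := by
      intro j
      rw [Fin.ext_iff]
      simp only [Fin.val_mk]
      constructor
      · intro h
        by_cases hj : (j : ℕ) % 2 = 1
        · rw [if_pos hj] at h
          have : ((j : ℕ) ^^^ 2 ^ t) % 2 = 1 := by rw [xor_mod_two _ _ ht1]; exact hj
          omega
        · rw [if_neg hj] at h
          omega
      · intro h
        have hj : ¬ ((j : ℕ) % 2 = 1) := by omega
        rw [if_neg hj]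
        omega
    rw [hsum _ k.isLt hiff]
    have hk0 : (k : ℕ) % 2 = 0 := by omega
    simp only [Wvec]
    simp only [hk0]
    norm_num

noncomputable def Dmat (n m : ℕ) (s : ℕ → Bool) (k : ℕ) : Matrix (Fin 2) (Fin 2) ℂ :=
  if k ≤ n then !![1, 0; 0, eps m s (n + 1 - k)] else 1

noncomputable def Nmat (n m : ℕ) (φ : ℕ → ℝ) (s : ℕ → Bool) :
    ℕ → Matrix (Fin 2) (Fin 2) ℂ
  | 0 => 1
  | k + 1 => Dmat n m s (k + 1) * (phaseGate (φ (k + 1)) * RXgate) * Nmat n m φ s k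

lemma step_mulVec (n m : ℕ) (φ : ℕ → ℝ) (s : ℕ → Bool) (k : ℕ) (hk : 1 ≤ k)
    (β : Fin 2 → ℂ) :
    stepGate n φ k *ᵥ Wvec n m s β
      = Wvec n m s ((Dmat n m s k * (phaseGate (φ k) * RXgate)) *ᵥ β) := by
  unfold stepGate
  rw [← Matrix.mulVec_mulVec, photon_mulVec,
    show (Dmat n m s k * (phaseGate (φ k) * RXgate)) *ᵥ β
        = Dmat n m s k *ᵥ ((phaseGate (φ k) * RXgate) *ᵥ β)
      from (Matrix.mulVec_mulVec _ _ _).symm]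
  set γ : Fin 2 → ℂ := (phaseGate (φ k) * RXgate) *ᵥ β with hγ
  by_cases hkn : k ≤ n
  · rw [if_pos hkn]
    rw [cnot_mulVec n m s (n + 1 - k) (by omega) (by omega)]
    unfold Dmat
    rw [if_pos hkn]
    refine congrArg (Wvec n m s) ?_
    funext b
    fin_cases b <;>
      simp [Matrix.mulVec, dotProduct, Fin.sum_univ_two]
  · rw [if_neg hkn]
    unfold Dmat
    rw [if_neg hkn]
    simp

lemma Sprod_mulVec (n m : ℕ) (φ : ℕ → ℝ) (s : ℕ → Bool) (k : ℕ) (β : Fin 2 → ℂ) :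
    Sprod n φ k *ᵥ Wvec n m s β = Wvec n m s (Nmat n m φ s k *ᵥ β) := by
  induction k with
  | zero => simp [Sprod, Nmat]
  | succ k ih =>
      show (stepGate n φ (k + 1) * Sprod n φ k) *ᵥ Wvec n m s β = _
      rw [← Matrix.mulVec_mulVec, ih, step_mulVec n m φ s (k + 1) (by omega),
        Matrix.mulVec_mulVec]
      rfl

lemma mul_uni {A B : Matrix (Fin 2) (Fin 2) ℂ} (hA : Aᴴ * A = 1) (hB : Bᴴ * B = 1) :
    (A * B)ᴴ * (A * B) = 1 := by
  rw [Matrix.conjTranspose_mul, Matrix.mul_assoc, ← Matrix.mul_assoc Aᴴ, hA,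
    Matrix.one_mul, hB]

lemma RX_uni : RXgateᴴ * RXgate = 1 := by
  have h2 : ((Real.sqrt 2 : ℝ) : ℂ) * ((Real.sqrt 2 : ℝ) : ℂ) = 2 := by
    rw [← Complex.ofReal_mul, Real.mul_self_sqrt (by norm_num)]
    norm_num
  have hne : ((Real.sqrt 2 : ℝ) : ℂ) ≠ 0 := by
    intro h
    rw [h, zero_mul] at h2
    norm_num at h2
  ext i j
  fin_cases i <;> fin_cases j <;>
    simp [RXgate, Matrix.mul_apply, Matrix.conjTranspose_apply, Fin.sum_univ_two,
      Complex.ofReal_div] <;>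
    field_simp <;>
    first
    | linear_combination (-2 : ℂ) * h2
    | linear_combination (-3 : ℂ) * h2
    | linear_combination (-1 : ℂ) * h2
    | (rw [← Complex.ofReal_pow, Real.sq_sqrt (by norm_num)]; norm_num)

lemma phase_uni (x : ℝ) : (phaseGate x)ᴴ * phaseGate x = 1 := by
  have key : (starRingEnd ℂ) (Complex.exp (I * x)) * Complex.exp (I * x) = 1 := by
    rw [← Complex.exp_conj, ← Complex.exp_add]
    have : (starRingEnd ℂ) (I * x) + I * x = 0 := by
      simp [Complex.conj_I, Complex.conj_ofReal]
    rw [this, Complex.exp_zero]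
  ext i j
  fin_cases i <;> fin_cases j <;>
    simp [phaseGate, Matrix.mul_apply, Matrix.conjTranspose_apply, Fin.sum_univ_two, key]

lemma D_uni (n m : ℕ) (s : ℕ → Bool) (k : ℕ) :
    (Dmat n m s k)ᴴ * Dmat n m s k = 1 := by
  unfold Dmat
  split
  · have key : (starRingEnd ℂ) (eps m s (n + 1 - k)) * eps m s (n + 1 - k) = 1 := by
      unfold eps
      split <;> simp
    ext i j
    fin_cases i <;> fin_cases j <;>
      simp [Matrix.mul_apply, Matrix.conjTranspose_apply, Fin.sum_univ_two, key]
  · simp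

lemma Nmat_uni (n m : ℕ) (φ : ℕ → ℝ) (s : ℕ → Bool) (k : ℕ) :
    (Nmat n m φ s k)ᴴ * Nmat n m φ s k = 1 := by
  induction k with
  | zero => simp [Nmat]
  | succ k ih =>
      show ((Dmat n m s (k + 1) * (phaseGate (φ (k + 1)) * RXgate) * Nmat n m φ s k)ᴴ *
        (Dmat n m s (k + 1) * (phaseGate (φ (k + 1)) * RXgate) * Nmat n m φ s k)) = 1
      exact mul_uni (mul_uni (D_uni n m s (k + 1))
        (mul_uni (phase_uni (φ (k + 1))) RX_uni)) ih

/-- Suppose `α = (α₀, α₁) ∈ ℂ²` with `|α₀|² + |α₁|² = 1` and `λ ∈ ℂ`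
satisfy `ϱ_{0,0}·α₀ + ϱ_{1,0}·α₁ = λ·2^{−n/2}·α₀` and `ϱ_{0,1}·α₀ + ϱ_{1,1}·α₁ = λ·2^{−n/2}·α₁`.
Then `U_Φ · E_{m,s,α} = λ · E_{m,s,α}`, i.e. `E_{m,s,α}` is an eigenvector of `U_Φ` with
eigenvalue `λ`, and moreover `|λ| = 1`. -/
theorem stmt10 (n m : ℕ) (hn : 1 ≤ n) (hm : 1 ≤ m) (hmn : m ≤ n + 1)
    (φ : ℕ → ℝ) (s : ℕ → Bool) (hs : 2 ≤ m → s (m - 1) = true)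
    (α : Fin 2 → ℂ) (hα : ‖α 0‖ ^ 2 + ‖α 1‖ ^ 2 = 1)
    (lam : ℂ)
    (h0 : rho n m φ s 0 0 * α 0 + rho n m φ s 1 0 * α 1 =
      lam * ((1 / Real.sqrt 2 : ℝ) ^ n : ℂ) * α 0)
    (h1 : rho n m φ s 0 1 * α 0 + rho n m φ s 1 1 * α 1 =
      lam * ((1 / Real.sqrt 2 : ℝ) ^ n : ℂ) * α 1) :
    Uphi n φ *ᵥ Evec n m s α = lam • Evec n m s α ∧ ‖lam‖ = 1 := by
  have hEW : ∀ γ : Fin 2 → ℂ, Evec n m s γ = Wvec n m s γ := fun γ => rfl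
  set N : Matrix (Fin 2) (Fin 2) ℂ := Nmat n m φ s (n + 1) with hN
  have hU : ∀ β, Uphi n φ *ᵥ Wvec n m s β = Wvec n m s (N *ᵥ β) :=
    fun β => Sprod_mulVec n m φ s (n + 1) β
  have hchi01 : ∀ x : ℕ, x < 2 → chi m s x = 1 := by
    intro x hx
    unfold chi
    refine Finset.prod_eq_one fun l hl => ?_
    have hl1 := (Finset.mem_Icc.mp hl).1
    have hb : x.testBit l = false := Nat.testBit_eq_false_of_lt (lt_of_lt_of_le hx (by
      calc (2 : ℕ) = 2 ^ 1 := rfl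
      _ ≤ 2 ^ l := Nat.pow_le_pow_right (by norm_num) hl1))
    simp [hb]
  set c : ℂ := ((1 / Real.sqrt 2 : ℝ) ^ n : ℂ) with hc
  have hcne : c ≠ 0 := by
    have h1 : (1 / Real.sqrt 2 : ℝ) ≠ 0 := by positivity
    exact pow_ne_zero _ (Complex.ofReal_ne_zero.mpr h1)
  have hrho : ∀ j₀ k₀ : Fin 2, rho n m φ s j₀ k₀ = c * N k₀ j₀ := by
    intro j₀ k₀
    unfold rho
    rw [hEW, hU]
    show c * chi m s ((k₀ : ℕ)) * (N *ᵥ fun i => if i = j₀ then 1 else 0)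
        ⟨(k₀ : ℕ) % 2, by omega⟩ = c * N k₀ j₀
    rw [hchi01 _ k₀.isLt, mul_one]
    congr 1
    have hb : (⟨(k₀ : ℕ) % 2, by omega⟩ : Fin 2) = k₀ := by
      ext
      simp [Nat.mod_eq_of_lt k₀.isLt]
    rw [hb]
    fin_cases j₀ <;> fin_cases k₀ <;>
      simp [Matrix.mulVec, dotProduct, Fin.sum_univ_two]
  have hNα : N *ᵥ α = lam • α := by
    rw [hrho 0 0, hrho 1 0] at h0
    rw [hrho 0 1, hrho 1 1] at h1
    funext b
    simp only [Pi.smul_apply, smul_eq_mul]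
    have key : ∀ b : Fin 2, c * ((N *ᵥ α) b) = c * (lam * α b) → (N *ᵥ α) b = lam * α b :=
      fun b h => mul_left_cancel₀ hcne h
    fin_cases b
    · refine key 0 ?_
      simp only [Matrix.mulVec, dotProduct, Fin.sum_univ_two]
      linear_combination h0
    · refine key 1 ?_
      simp only [Matrix.mulVec, dotProduct, Fin.sum_univ_two]
      linear_combination h1
  have hdot : dotProduct (star α) α = 1 := by
    have e : ∀ z : ℂ, (starRingEnd ℂ) z * z = ((‖z‖ : ℝ) ^ 2 : ℝ) := by
      intro z
      rw [mul_comm, Complex.mul_conj, Complex.normSq_eq_norm_sq]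
    simp only [dotProduct, Fin.sum_univ_two, Pi.star_apply, Complex.star_def, e]
    rw [← Complex.ofReal_add, hα, Complex.ofReal_one]
  constructor
  · rw [hEW, hU, hNα]
    funext j
    simp only [Wvec, Pi.smul_apply, smul_eq_mul]
    ring
  · have hUni : Nᴴ * N = 1 := Nmat_uni n m φ s (n + 1)
    have h2 : dotProduct (star (N *ᵥ α)) (N *ᵥ α)
        = dotProduct (star α) α := by
      rw [Matrix.star_mulVec, dotProduct_mulVec, Matrix.vecMul_vecMul, hUni,
        Matrix.vecMul_one]
    rw [hNα] at h2
    have h3 : dotProduct (star (lam • α)) (lam • α)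
        = (starRingEnd ℂ) lam * lam * dotProduct (star α) α := by
      simp only [dotProduct, Fin.sum_univ_two, Pi.smul_apply, smul_eq_mul,
        Pi.star_apply, Complex.star_def]
      simp only [_root_.map_mul]
      ring
    rw [h3, hdot, mul_one] at h2
    have h4 : Complex.normSq lam = 1 := by
      have : ((Complex.normSq lam : ℝ) : ℂ) = 1 := by
        rw [← Complex.mul_conj, mul_comm]
        exact h2
      exact_mod_cast this
    rw [Complex.norm_def, h4, Real.sqrt_one]
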